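/- For any modal formula A, the following are equivalent: (1) GL proves ⋀Rf(□A) → ¬□A, where Rf(□A) = {□B → B : □B is a subformula of □A}; (2) GL proves ◇^{cx(A)+1}⊤ → ¬□A; (3) GL_ω proves ¬□A; (4) GLS proves ¬□A. -/

import Mathlib

/-- Modal propositional formulas (variables are indexed by `ℕ`). -/
inductive MF : Type
  | var : ℕ → MF
  | fal : MF
  | imp : MF → MF → MF
  | box : MF → MF
deriving DecidableEq

namespace MF

def neg (A : MF) : MF := imp A fal
def top : MF := neg fal
def conj (A B : MF) : MF := neg (imp A (neg B))
def disj (A B : MF) : MF := imp (neg A) B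
def biimp (A B : MF) : MF := conj (imp A B) (imp B A)
def dia (A : MF) : MF := neg (box (neg A))
def boxn : ℕ → MF → MF
  | 0, A => A
  | n+1, A => box (boxn n A)
def dian (n : ℕ) (A : MF) : MF := neg (boxn n (neg A))

/-- Uniform substitution. -/
def subst (s : ℕ → MF) : MF → MF
  | var n => s n
  | fal => fal
  | imp A B => imp (subst s A) (subst s B)
  | box A => box (subst s A)

/-- The set of subformulas. -/
def subF : MF → Finset MF
  | var n => {var n}
  | fal => {fal}
  | imp A B => insert (imp A B) (subF A ∪ subF B)
  | box A => insert (box A) (subF A)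

def isBox : MF → Bool
  | box _ => true
  | _ => false

def unbox : MF → MF
  | box A => A
  | A => A

/-- `cx A` is the number of subformulas of `A` of the form `□C`. -/
def cx (A : MF) : ℕ := ((subF A).filter (fun B => isBox B = true)).card

/-- `Rf(A) = {□B → B : □B ∈ Sub(A)}`. -/
def RfSet (A : MF) : Finset MF :=
  ((subF A).filter (fun B => isBox B = true)).image (fun B => imp B (unbox B))

/-- Conjunction of a finite set of formulas. -/
noncomputable def conjFin (s : Finset MF) : MF := s.toList.foldr conj top

/-- `A` is an instance of a propositional tautology. -/
def TautInst (A : MF) : Prop :=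
  ∀ v : MF → Bool, (∀ B C, v (imp B C) = (!(v B) || v C)) → v fal = false → v A = true

end MF

/-- Provability in the Gödel–Löb logic GL. -/
inductive GLPrv : MF → Prop
  | taut {A} : MF.TautInst A → GLPrv A
  | k (A B : MF) : GLPrv (MF.imp (MF.box (MF.imp A B)) (MF.imp (MF.box A) (MF.box B)))
  | lob (A : MF) : GLPrv (MF.imp (MF.box (MF.imp (MF.box A) A)) (MF.box A))
  | mp {A B} : GLPrv (MF.imp A B) → GLPrv A → GLPrv B
  | nec {A} : GLPrv A → GLPrv (MF.box A)

/-- Provability in GL + Γ: axioms are GL-theorems and substitution instances of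
formulas in Γ; rules are modus ponens (and substitution, built into the axiom rule). -/
inductive ExtPrv (Ax : Set MF) : MF → Prop
  | gl {A} : GLPrv A → ExtPrv Ax A
  | ax {A} (s : ℕ → MF) : A ∈ Ax → ExtPrv Ax (A.subst s)
  | mp {A B} : ExtPrv Ax (MF.imp A B) → ExtPrv Ax A → ExtPrv Ax B

/-- GL_ω = GL + {◇ⁿ⊤ : n ∈ ω}. -/
def GLomegaPrv : MF → Prop := ExtPrv (Set.range fun n => MF.dian n MF.top)

/-- GLS = GL + {□p → p}. -/
def GLSPrv : MF → Prop := ExtPrv {MF.imp (MF.box (MF.var 0)) (MF.var 0)}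

/-- F_s = □^{s+1}⊥ → □^s⊥. -/
def Fmla (s : ℕ) : MF := MF.imp (MF.boxn (s+1) MF.fal) (MF.boxn s MF.fal)

/-- GL + {¬F_s}. -/
def GLFPrv (s : ℕ) : MF → Prop := ExtPrv {MF.neg (Fmla s)}

section Toolkit
open MF

/-- Size of a formula. -/
def MF.sz : MF → ℕ
  | MF.var _ => 0
  | MF.fal => 0
  | MF.imp A B => A.sz + B.sz + 1
  | MF.box A => A.sz + 1

lemma MF.sz_le_of_mem_subF {B A : MF} (h : B ∈ A.subF) : B.sz ≤ A.sz := by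
  induction A with
  | var n => simp [MF.subF] at h; subst h; rfl
  | fal => simp [MF.subF] at h; subst h; rfl
  | imp A C ihA ihC =>
      simp [MF.subF] at h
      rcases h with h | h | h
      · subst h; rfl
      · exact le_trans (ihA h) (by simp [MF.sz]; omega)
      · exact le_trans (ihC h) (by simp [MF.sz]; omega)
  | box A ihA =>
      simp [MF.subF] at h
      rcases h with h | h
      · subst h; rfl
      · exact le_trans (ihA h) (by simp [MF.sz])

lemma MF.box_not_mem_subF (A : MF) : MF.box A ∉ A.subF := by
  intro h
  have := MF.sz_le_of_mem_subF h
  simp [MF.sz] at this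

lemma MF.box_ne (A : MF) : MF.box A ≠ A := by
  intro h
  have : (MF.box A).sz = A.sz := by rw [h]
  simp [MF.sz] at this

lemma MF.mem_subF_self (A : MF) : A ∈ A.subF := by
  cases A <;> simp [MF.subF]

lemma MF.subF_subset_of_mem {B A : MF} (h : B ∈ A.subF) : B.subF ⊆ A.subF := by
  induction A with
  | var n => simp [MF.subF] at h; subst h; simp [MF.subF]
  | fal => simp [MF.subF] at h; subst h; simp [MF.subF]
  | imp A C ihA ihC =>
      simp only [MF.subF, Finset.mem_insert, Finset.mem_union] at h
      rcases h with h | h | h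
      · subst h; exact Finset.Subset.refl _
      · intro x hx
        have := ihA h hx
        simp only [MF.subF, Finset.mem_insert, Finset.mem_union]; tauto
      · intro x hx
        have := ihC h hx
        simp only [MF.subF, Finset.mem_insert, Finset.mem_union]; tauto
  | box A ihA =>
      simp only [MF.subF, Finset.mem_insert] at h
      rcases h with h | h
      · subst h; exact Finset.Subset.refl _
      · intro x hx
        have := ihA h hx
        simp only [MF.subF, Finset.mem_insert]; tauto

namespace GLPrv

/-- Derived rule: distribute box over implication. -/
lemma boxImp {X Y : MF} (h : GLPrv (MF.imp X Y)) : GLPrv (MF.imp (MF.box X) (MF.box Y)) :=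
  GLPrv.mp (GLPrv.k X Y) (GLPrv.nec h)

lemma t_id (X : MF) : GLPrv (MF.imp X X) := by
  apply GLPrv.taut; intro v hv hf
  simp only [hv, hf]
  cases v X <;> rfl

lemma imp_trans {X Y Z : MF} (h1 : GLPrv (MF.imp X Y)) (h2 : GLPrv (MF.imp Y Z)) :
    GLPrv (MF.imp X Z) := by
  have t : GLPrv (MF.imp (MF.imp X Y) (MF.imp (MF.imp Y Z) (MF.imp X Z))) := by
    apply GLPrv.taut; intro v hv hf
    simp only [hv, hf]
    cases v X <;> cases v Y <;> cases v Z <;> rfl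
  exact GLPrv.mp (GLPrv.mp t h1) h2

/-- From ⊢ X → (Y → Z) and ⊢ X → Y conclude ⊢ X → Z. -/
lemma impMP {X Y Z : MF} (h1 : GLPrv (MF.imp X (MF.imp Y Z))) (h2 : GLPrv (MF.imp X Y)) :
    GLPrv (MF.imp X Z) := by
  have t : GLPrv (MF.imp (MF.imp X (MF.imp Y Z)) (MF.imp (MF.imp X Y) (MF.imp X Z))) := by
    apply GLPrv.taut; intro v hv hf
    simp only [hv, hf]
    cases v X <;> cases v Y <;> cases v Z <;> rfl
  exact GLPrv.mp (GLPrv.mp t h1) h2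

lemma t_weaken {X Y : MF} (h : GLPrv Y) : GLPrv (MF.imp X Y) := by
  have t : GLPrv (MF.imp Y (MF.imp X Y)) := by
    apply GLPrv.taut; intro v hv hf
    simp only [hv, hf]
    cases v X <;> cases v Y <;> rfl
  exact GLPrv.mp t h

lemma conj_left (X Y : MF) : GLPrv (MF.imp (MF.conj X Y) X) := by
  apply GLPrv.taut; intro v hv hf
  simp only [MF.conj, MF.neg, hv, hf]
  cases v X <;> cases v Y <;> rfl

lemma conj_right (X Y : MF) : GLPrv (MF.imp (MF.conj X Y) Y) := by
  apply GLPrv.taut; intro v hv hf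
  simp only [MF.conj, MF.neg, hv, hf]
  cases v X <;> cases v Y <;> rfl

lemma conj_intro {X Y Z : MF} (h1 : GLPrv (MF.imp X Y)) (h2 : GLPrv (MF.imp X Z)) :
    GLPrv (MF.imp X (MF.conj Y Z)) := by
  have t : GLPrv (MF.imp (MF.imp X Y) (MF.imp (MF.imp X Z) (MF.imp X (MF.conj Y Z)))) := by
    apply GLPrv.taut; intro v hv hf
    simp only [MF.conj, MF.neg, hv, hf]
    cases v X <;> cases v Y <;> cases v Z <;> rfl
  exact GLPrv.mp (GLPrv.mp t h1) h2

lemma t_top (X : MF) : GLPrv (MF.imp X MF.top) := by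
  apply GLPrv.taut; intro v hv hf
  simp only [MF.top, MF.neg, hv, hf]
  cases v X <;> rfl

/-- GL ⊢ □X → □□X. -/
lemma t_four_aux (X P Q : MF) : GLPrv (MF.imp (MF.imp P Q)
    (MF.imp X (MF.imp P (MF.conj X Q)))) := by
  apply GLPrv.taut; intro v hv hf
  simp only [MF.conj, MF.neg, hv, hf]
  cases v X <;> cases v P <;> cases v Q <;> rfl

lemma four (X : MF) : GLPrv (MF.imp (MF.box X) (MF.box (MF.box X))) := by
  have h1 : GLPrv (MF.imp X (MF.imp (MF.box (MF.conj X (MF.box X))) (MF.conj X (MF.box X)))) := by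
    have hDX : GLPrv (MF.imp (MF.box (MF.conj X (MF.box X))) (MF.box X)) :=
      boxImp (conj_left _ _)
    exact GLPrv.mp (t_four_aux X _ _) hDX
  have h2 : GLPrv (MF.imp (MF.box X)
      (MF.box (MF.imp (MF.box (MF.conj X (MF.box X))) (MF.conj X (MF.box X))))) := boxImp h1
  have h3 : GLPrv (MF.imp (MF.box X) (MF.box (MF.conj X (MF.box X)))) :=
    imp_trans h2 (GLPrv.lob _)
  exact imp_trans h3 (boxImp (conj_right _ _))

/-- Combine boxes over a conjunction. -/
lemma box_conj_intro {Z X Y : MF} (h1 : GLPrv (MF.imp Z (MF.box X)))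
    (h2 : GLPrv (MF.imp Z (MF.box Y))) : GLPrv (MF.imp Z (MF.box (MF.conj X Y))) := by
  have t : GLPrv (MF.imp X (MF.imp Y (MF.conj X Y))) := by
    apply GLPrv.taut; intro v hv hf
    simp only [MF.conj, MF.neg, hv, hf]
    cases v X <;> cases v Y <;> rfl
  have k1 : GLPrv (MF.imp (MF.box X) (MF.box (MF.imp Y (MF.conj X Y)))) := boxImp t
  have k2 : GLPrv (MF.imp (MF.box (MF.imp Y (MF.conj X Y)))
      (MF.imp (MF.box Y) (MF.box (MF.conj X Y)))) := GLPrv.k _ _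
  exact impMP (imp_trans h1 (imp_trans k1 k2)) h2

end GLPrv

/-- Conjunction of a list of formulas. -/
def bigC (L : List MF) : MF := L.foldr MF.conj MF.top

lemma conjFin_eq_bigC (s : Finset MF) : MF.conjFin s = bigC s.toList := rfl

namespace GLPrv

lemma bigC_elim {L : List MF} {C : MF} (h : C ∈ L) : GLPrv (MF.imp (bigC L) C) := by
  induction L with
  | nil => simp at h
  | cons D L ih =>
      rcases List.mem_cons.1 h with h | h
      · subst h; exact conj_left _ _
      · exact imp_trans (conj_right _ _) (ih h)

lemma bigC_intro {X : MF} {L : List MF} (h : ∀ C ∈ L, GLPrv (MF.imp X C)) :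
    GLPrv (MF.imp X (bigC L)) := by
  induction L with
  | nil => exact t_top X
  | cons D L ih =>
      exact conj_intro (h D (by simp)) (ih (fun C hC => h C (by simp [hC])))

lemma box_bigC {X : MF} {L : List MF} (h : ∀ C ∈ L, GLPrv (MF.imp X (MF.box C))) :
    GLPrv (MF.imp X (MF.box (bigC L))) := by
  induction L with
  | nil =>
      have htop : GLPrv MF.top := by
        apply GLPrv.taut; intro v hv hf; simp only [MF.top, MF.neg, hv, hf]; rfl
      exact t_weaken (GLPrv.nec htop)
  | cons D L ih =>
      exact box_conj_intro (h D (by simp)) (ih (fun C hC => h C (by simp [hC])))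

end GLPrv
end Toolkit

section Semantics

/-- A transitive, conversely well-founded Kripke model. -/
structure KModel where
  W : Type
  R : W → W → Prop
  val : W → ℕ → Prop
  trans : Transitive R
  cwf : WellFounded (Function.swap R)

/-- Truth in a Kripke model. -/
def Tr (M : KModel) : MF → M.W → Prop
  | MF.var n, w => M.val w n
  | MF.fal, _ => False
  | MF.imp A B, w => Tr M A w → Tr M B w
  | MF.box A, w => ∀ v, M.R w v → Tr M A v

lemma Tr_conj {M : KModel} {A B : MF} {w : M.W} :
    Tr M (MF.conj A B) w ↔ Tr M A w ∧ Tr M B w := by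
  simp only [MF.conj, MF.neg, Tr]
  tauto

lemma Tr_neg {M : KModel} {A : MF} {w : M.W} : Tr M (MF.neg A) w ↔ ¬ Tr M A w :=
  Iff.rfl

lemma Tr_top {M : KModel} {w : M.W} : Tr M MF.top w := by
  simp [MF.top, Tr_neg, Tr]

lemma Tr_bigC {M : KModel} {L : List MF} {w : M.W} :
    Tr M (bigC L) w ↔ ∀ C ∈ L, Tr M C w := by
  induction L with
  | nil => simpa [bigC] using Tr_top
  | cons D L ih =>
      show Tr M (MF.conj D (bigC L)) w ↔ _
      rw [Tr_conj, ih]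
      simp

/-- Box formulas persist along the accessibility relation. -/
lemma Tr_box_mono {M : KModel} {A : MF} {w v : M.W} (h : Tr M (MF.box A) w)
    (hR : M.R w v) : Tr M (MF.box A) v := fun u hu => h u (M.trans hR hu)

/-- Soundness of GL with respect to transitive conversely well-founded models. -/
theorem soundness {A : MF} (h : GLPrv A) (M : KModel) : ∀ w, Tr M A w := by
  induction h with
  | @taut A ht =>
      intro w
      classical
      have key : ∀ B : MF, (if Tr M B w then true else false) = true ↔ Tr M B w := by
        intro B; by_cases hB : Tr M B w <;> simp [hB]
      have := ht (fun B => if Tr M B w then true else false)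
        (by
          intro B C
          by_cases hB : Tr M B w <;> by_cases hC : Tr M C w <;>
            simp [Tr, hB, hC])
        (by simp [Tr])
      exact (key A).1 this
  | k A B =>
      intro w hAB hA v hv
      exact hAB v hv (hA v hv)
  | lob A =>
      intro w hbox
      intro v hv
      induction v using WellFounded.induction M.cwf with
      | _ v ih =>
          refine hbox v hv ?_
          intro u hu
          exact ih u hu (M.trans hv hu)
  | mp h1 h2 ih1 ih2 =>
      intro w
      exact ih1 w (ih2 w)
  | nec h ih =>
      intro w v hv
      exact ih v

end Semantics

section Canonical
open MF

lemma MF.eq_box_unbox_of_isBox {C : MF} (h : MF.isBox C = true) :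
    C = MF.box (MF.unbox C) := by
  cases C <;> simp_all [MF.isBox, MF.unbox]

lemma MF.imp_mem_left {B C X : MF} (h : MF.imp B C ∈ X.subF) : B ∈ X.subF :=
  MF.subF_subset_of_mem h
    (Finset.mem_insert_of_mem (Finset.mem_union_left _ (MF.mem_subF_self B)))

lemma MF.imp_mem_right {B C X : MF} (h : MF.imp B C ∈ X.subF) : C ∈ X.subF :=
  MF.subF_subset_of_mem h
    (Finset.mem_insert_of_mem (Finset.mem_union_right _ (MF.mem_subF_self C)))

lemma MF.box_mem_unbox {B X : MF} (h : MF.box B ∈ X.subF) : B ∈ X.subF :=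
  MF.subF_subset_of_mem h (Finset.mem_insert_of_mem (MF.mem_subF_self B))

namespace GLPrv

lemma r_neg_elim {P Q : MF} (h1 : GLPrv (MF.imp P Q)) (h2 : GLPrv (MF.imp P (MF.neg Q))) :
    GLPrv (MF.neg P) := by
  have t : GLPrv (MF.imp (MF.imp P Q) (MF.imp (MF.imp P (MF.neg Q)) (MF.neg P))) := by
    apply GLPrv.taut; intro v hv hf
    simp only [MF.neg, hv, hf]
    cases v P <;> cases v Q <;> rfl
  exact GLPrv.mp (GLPrv.mp t h1) h2

lemma t_negb_imp (P Q : MF) : GLPrv (MF.imp (MF.neg P) (MF.imp P Q)) := by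
  apply GLPrv.taut; intro v hv hf
  simp only [MF.neg, hv, hf]
  cases v P <;> cases v Q <;> rfl

lemma t_c_imp (P Q : MF) : GLPrv (MF.imp Q (MF.imp P Q)) := by
  apply GLPrv.taut; intro v hv hf
  simp only [hv, hf]
  cases v P <;> cases v Q <;> rfl

lemma r_split {P Q : MF} (h1 : GLPrv (MF.imp (MF.conj P Q) MF.fal))
    (h2 : GLPrv (MF.imp (MF.conj (MF.neg P) Q) MF.fal)) : GLPrv (MF.neg Q) := by
  have t : GLPrv (MF.imp (MF.imp (MF.conj P Q) MF.fal)
      (MF.imp (MF.imp (MF.conj (MF.neg P) Q) MF.fal) (MF.neg Q))) := by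
    apply GLPrv.taut; intro v hv hf
    simp only [MF.conj, MF.neg, hv, hf]
    cases v P <;> cases v Q <;> rfl
  exact GLPrv.mp (GLPrv.mp t h1) h2

lemma r_lob_aux {P Q R : MF} (h : GLPrv (MF.imp (MF.conj P (MF.conj (MF.neg Q) R)) MF.fal)) :
    GLPrv (MF.imp R (MF.imp P Q)) := by
  have t : GLPrv (MF.imp (MF.imp (MF.conj P (MF.conj (MF.neg Q) R)) MF.fal)
      (MF.imp R (MF.imp P Q))) := by
    apply GLPrv.taut; intro v hv hf
    simp only [MF.conj, MF.neg, hv, hf]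
    cases v P <;> cases v Q <;> cases v R <;> rfl
  exact GLPrv.mp t h

lemma r_dne {P : MF} (h : GLPrv (MF.imp (MF.neg P) MF.fal)) : GLPrv P := by
  have t : GLPrv (MF.imp (MF.imp (MF.neg P) MF.fal) P) := by
    apply GLPrv.taut; intro v hv hf
    simp only [MF.neg, hv, hf]
    cases v P <;> rfl
  exact GLPrv.mp t h

end GLPrv

/-- The list of signed formulas determined by `f` on `s`. -/
noncomputable def asn (s : Finset MF) (f : MF → Bool) : List MF :=
  s.toList.map (fun B => cond (f B) B (MF.neg B))

/-- The conjunction of the signed formulas determined by `f` on `s`. -/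
noncomputable def chi (s : Finset MF) (f : MF → Bool) : MF := bigC (asn s f)

/-- `f` is consistent on `s`. -/
def ConOn (s : Finset MF) (f : MF → Bool) : Prop := ¬ GLPrv (MF.neg (chi s f))

lemma chi_entry {s : Finset MF} {f : MF → Bool} {C : MF} (h : C ∈ s) :
    GLPrv (MF.imp (chi s f) (cond (f C) C (MF.neg C))) :=
  GLPrv.bigC_elim (List.mem_map_of_mem (Finset.mem_toList.mpr h))

lemma chi_proj_true {s : Finset MF} {f : MF → Bool} {C : MF} (h : C ∈ s)
    (hf : f C = true) : GLPrv (MF.imp (chi s f) C) := by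
  have := chi_entry (f := f) h
  rwa [hf] at this

lemma chi_proj_false {s : Finset MF} {f : MF → Bool} {C : MF} (h : C ∈ s)
    (hf : f C = false) : GLPrv (MF.imp (chi s f) (MF.neg C)) := by
  have := chi_entry (f := f) h
  rwa [hf] at this

lemma chi_intro {Z : MF} {s : Finset MF} {f : MF → Bool}
    (h : ∀ C ∈ s, GLPrv (MF.imp Z (cond (f C) C (MF.neg C)))) :
    GLPrv (MF.imp Z (chi s f)) := by
  apply GLPrv.bigC_intro
  intro D hD
  rcases List.mem_map.mp hD with ⟨C, hC, rfl⟩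
  exact h C (Finset.mem_toList.mp hC)

lemma chi_box_intro {Z : MF} {s : Finset MF} {f : MF → Bool}
    (h : ∀ C ∈ s, GLPrv (MF.imp Z (MF.box (cond (f C) C (MF.neg C))))) :
    GLPrv (MF.imp Z (MF.box (chi s f))) := by
  apply GLPrv.box_bigC
  intro D hD
  rcases List.mem_map.mp hD with ⟨C, hC, rfl⟩
  exact h C (Finset.mem_toList.mp hC)

lemma con_step (s : Finset MF) (B : MF) (hB : B ∉ s) (f : MF → Bool) (h : ConOn s f) :
    ConOn (insert B s) (Function.update f B true) ∨
      ConOn (insert B s) (Function.update f B false) := by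
  by_contra hc
  push_neg at hc
  obtain ⟨h1, h2⟩ := hc
  rw [ConOn, not_not] at h1 h2
  apply h
  have key : ∀ b : Bool, GLPrv (MF.imp (MF.conj (cond b B (MF.neg B)) (chi s f))
      (chi (insert B s) (Function.update f B b))) := by
    intro b
    apply chi_intro
    intro C hC
    by_cases hCB : C = B
    · subst hCB
      rw [Function.update_self]
      exact GLPrv.conj_left _ _
    · rw [Function.update_of_ne hCB]
      exact GLPrv.imp_trans (GLPrv.conj_right _ _)
        (chi_entry (Finset.mem_of_mem_insert_of_ne hC hCB))
  have e1 : GLPrv (MF.imp (MF.conj B (chi s f)) MF.fal) :=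
    GLPrv.imp_trans (key true) h1
  have e2 : GLPrv (MF.imp (MF.conj (MF.neg B) (chi s f)) MF.fal) :=
    GLPrv.imp_trans (key false) h2
  exact GLPrv.r_split e1 e2

lemma lindenbaum (X : MF) : ∀ (n : ℕ) (s : Finset MF), (X.subF \ s).card = n →
    s ⊆ X.subF → ∀ f, ConOn s f →
    ∃ g, ConOn X.subF g ∧ ∀ B ∈ s, g B = f B := by
  intro n
  induction n using Nat.strong_induction_on with
  | _ n ih =>
    intro s hcard hs f hf
    rcases Finset.eq_empty_or_nonempty (X.subF \ s) with he | ⟨B, hBmem⟩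
    · have hse : s = X.subF :=
        Finset.Subset.antisymm hs (Finset.sdiff_eq_empty_iff_subset.mp he)
      exact ⟨f, by rwa [hse] at hf, fun B _ => rfl⟩
    · obtain ⟨hBΦ, hBs⟩ := Finset.mem_sdiff.mp hBmem
      have hstep := con_step s B hBs f hf
      have hsub : insert B s ⊆ X.subF := Finset.insert_subset hBΦ hs
      have hcard' : (X.subF \ insert B s).card = n - 1 := by
        have : X.subF \ insert B s = (X.subF \ s).erase B := by
          ext C
          simp only [Finset.mem_sdiff, Finset.mem_insert, Finset.mem_erase]
          tauto
        rw [this, Finset.card_erase_of_mem hBmem, hcard]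
      have hlt : n - 1 < n := by
        have : 0 < n := by
          rw [← hcard]
          exact Finset.card_pos.mpr ⟨B, hBmem⟩
        omega
      rcases hstep with hc | hc
      · obtain ⟨g, hg, hagree⟩ := ih (n - 1) hlt (insert B s) hcard' hsub _ hc
        refine ⟨g, hg, fun C hC => ?_⟩
        have hne : C ≠ B := fun h => hBs (h ▸ hC)
        rw [hagree C (Finset.mem_insert_of_mem hC), Function.update_of_ne hne]
      · obtain ⟨g, hg, hagree⟩ := ih (n - 1) hlt (insert B s) hcard' hsub _ hc
        refine ⟨g, hg, fun C hC => ?_⟩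
        have hne : C ≠ B := fun h => hBs (h ▸ hC)
        rw [hagree C (Finset.mem_insert_of_mem hC), Function.update_of_ne hne]

/-- Worlds of the canonical model for `X`. -/
def CW (X : MF) := {f : MF → Bool // ConOn X.subF f}

/-- Accessibility of the canonical model. -/
def CR (X : MF) (f g : CW X) : Prop :=
  (∀ B, MF.box B ∈ X.subF → f.1 (MF.box B) = true →
      g.1 B = true ∧ g.1 (MF.box B) = true) ∧
  (∃ B, MF.box B ∈ X.subF ∧ g.1 (MF.box B) = true ∧ f.1 (MF.box B) = false)

lemma CR_trans (X : MF) : Transitive (CR X) := by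
  intro f g h hfg hgh
  obtain ⟨f1, B1, hB1, hgB1, hfB1⟩ := hfg
  obtain ⟨g1, _⟩ := hgh
  refine ⟨?_, B1, hB1, (g1 B1 hB1 hgB1).2, hfB1⟩
  intro B hB hf
  exact g1 B hB (f1 B hB hf).2

lemma CR_wf (X : MF) : WellFounded (Function.swap (CR X)) := by
  classical
  have hm : ∀ {f g : CW X}, CR X f g →
      (X.subF.filter (fun B => MF.isBox B = true ∧ g.1 B = false)).card <
      (X.subF.filter (fun B => MF.isBox B = true ∧ f.1 B = false)).card := by
    intro f g hfg
    obtain ⟨h1, B0, hB0, hgB0, hfB0⟩ := hfg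
    apply Finset.card_lt_card
    constructor
    · intro C hC
      rw [Finset.mem_filter] at hC ⊢
      obtain ⟨hCΦ, hCbox, hgC⟩ := hC
      refine ⟨hCΦ, hCbox, ?_⟩
      by_contra hfC
      rw [Bool.not_eq_false] at hfC
      have hC' := MF.eq_box_unbox_of_isBox hCbox
      have h2 := (h1 (MF.unbox C) (hC' ▸ hCΦ) (hC' ▸ hfC)).2
      rw [← hC'] at h2
      simp [h2] at hgC
    · intro hsub
      have hmem := hsub (Finset.mem_filter.mpr ⟨hB0, rfl, hfB0⟩)
      rw [Finset.mem_filter] at hmem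
      simp [hgB0] at hmem
  have hw : WellFounded (InvImage (· < ·)
      (fun f : CW X => (X.subF.filter (fun B => MF.isBox B = true ∧ f.1 B = false)).card)) :=
    InvImage.wf _ (Nat.lt_wfRel.wf)
  exact Subrelation.wf (fun {g f} h => hm h) hw

/-- The canonical model. -/
def CM (X : MF) : KModel :=
  ⟨CW X, CR X, fun f n => f.1 (MF.var n) = true, CR_trans X, CR_wf X⟩

end Canonical

section Truth
open MF

/-- The set of true boxed formulas at a world. -/
noncomputable def boxT (X : MF) (f : CW X) : Finset MF :=
  X.subF.filter (fun C => MF.isBox C = true ∧ f.1 C = true)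

lemma exists_successor (X : MF) (f : CW X) (B : MF) (hB : MF.box B ∈ X.subF)
    (hf : f.1 (MF.box B) = false) : ∃ g : CW X, CR X f g ∧ g.1 B = false := by
  classical
  set Φ := X.subF with hΦ
  set T := boxT X f with hT
  set P := T ∪ T.image MF.unbox with hP
  set s₀ : Finset MF := insert (MF.box B) (insert B P) with hs₀
  set g₀ : MF → Bool := fun C => if C = B then false else true with hg₀
  -- facts about members of T
  have hTfact : ∀ E ∈ T, MF.isBox E = true ∧ f.1 E = true ∧ E ∈ Φ := by
    intro E hE
    rw [hT, boxT, Finset.mem_filter] at hE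
    exact ⟨hE.2.1, hE.2.2, hE.1⟩
  -- (I1): no element of T equals B
  have hI1 : ∀ E ∈ T, E ≠ B := by
    intro E hE hEB
    obtain ⟨hEbox, hEtrue, hEΦ⟩ := hTfact E hE
    have hEunbox := MF.eq_box_unbox_of_isBox hEbox
    have p1 : GLPrv (MF.imp (chi Φ f.1) E) := chi_proj_true hEΦ hEtrue
    have p2 : GLPrv (MF.imp E (MF.box E)) := by
      rw [hEunbox]; exact GLPrv.four _
    have p3 : GLPrv (MF.imp (chi Φ f.1) (MF.box B)) := by
      rw [← hEB]; exact GLPrv.imp_trans p1 p2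
    have p4 : GLPrv (MF.imp (chi Φ f.1) (MF.neg (MF.box B))) := chi_proj_false hB hf
    exact f.2 (GLPrv.r_neg_elim p3 p4)
  -- (I2): no unboxing of an element of T equals B
  have hI2 : ∀ E ∈ T, MF.unbox E ≠ B := by
    intro E hE hEB
    obtain ⟨hEbox, hEtrue, _⟩ := hTfact E hE
    have hEunbox := MF.eq_box_unbox_of_isBox hEbox
    rw [hEB] at hEunbox
    rw [hEunbox] at hEtrue
    simp [hEtrue] at hf
  have hPne : ∀ C ∈ P, C ≠ B := by
    intro C hC
    rw [hP, Finset.mem_union] at hC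
    rcases hC with hC | hC
    · exact hI1 C hC
    · obtain ⟨E, hE, rfl⟩ := Finset.mem_image.mp hC
      exact hI2 E hE
  have hg₀P : ∀ C ∈ P, g₀ C = true := by
    intro C hC
    simp [hg₀, hPne C hC]
  have hg₀boxB : g₀ (MF.box B) = true := by simp [hg₀, MF.box_ne B]
  have hg₀B : g₀ B = false := by simp [hg₀]
  -- s₀ ⊆ Φ
  have hPsub : P ⊆ Φ := by
    intro C hC
    rw [hP, Finset.mem_union] at hC
    rcases hC with hC | hC
    · exact (hTfact C hC).2.2
    · obtain ⟨E, hE, rfl⟩ := Finset.mem_image.mp hC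
      obtain ⟨hEbox, _, hEΦ⟩ := hTfact E hE
      have := MF.eq_box_unbox_of_isBox hEbox
      exact MF.box_mem_unbox (this ▸ hEΦ)
  have hs₀sub : s₀ ⊆ Φ := by
    rw [hs₀]
    apply Finset.insert_subset hB
    exact Finset.insert_subset (MF.box_mem_unbox hB) hPsub
  -- consistency of (s₀, g₀), via Löb
  have hcon : ConOn s₀ g₀ := by
    intro hneg
    -- Step A : box B ∧ (¬B ∧ chi P g₀) entails chi s₀ g₀
    have stepA : GLPrv (MF.imp
        (MF.conj (MF.box B) (MF.conj (MF.neg B) (chi P g₀))) (chi s₀ g₀)) := by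
      apply chi_intro
      intro C hC
      rw [hs₀, Finset.mem_insert, Finset.mem_insert] at hC
      rcases hC with rfl | rfl | hC
      · rw [hg₀boxB]
        exact GLPrv.conj_left _ _
      · rw [hg₀B]
        exact GLPrv.imp_trans (GLPrv.conj_right _ _) (GLPrv.conj_left _ _)
      · rw [hg₀P C hC]
        refine GLPrv.imp_trans (GLPrv.conj_right _ _)
          (GLPrv.imp_trans (GLPrv.conj_right _ _) ?_)
        have := chi_proj_true (f := g₀) hC (hg₀P C hC)
        exact this
    have stepB : GLPrv (MF.imp (chi P g₀) (MF.imp (MF.box B) B)) :=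
      GLPrv.r_lob_aux (GLPrv.imp_trans stepA hneg)
    -- Step C : chi Φ f entails box (chi P g₀)
    have stepC : GLPrv (MF.imp (chi Φ f.1) (MF.box (chi P g₀))) := by
      apply chi_box_intro
      intro C hC
      rw [hg₀P C hC]
      rw [hP, Finset.mem_union] at hC
      rcases hC with hC | hC
      · obtain ⟨hCbox, hCtrue, hCΦ⟩ := hTfact C hC
        have p1 : GLPrv (MF.imp (chi Φ f.1) C) := chi_proj_true hCΦ hCtrue
        have p2 : GLPrv (MF.imp C (MF.box C)) := by
          rw [MF.eq_box_unbox_of_isBox hCbox]; exact GLPrv.four _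
        exact GLPrv.imp_trans p1 p2
      · obtain ⟨E, hE, rfl⟩ := Finset.mem_image.mp hC
        obtain ⟨hEbox, hEtrue, hEΦ⟩ := hTfact E hE
        have p1 : GLPrv (MF.imp (chi Φ f.1) E) := chi_proj_true hEΦ hEtrue
        rw [MF.eq_box_unbox_of_isBox hEbox] at p1
        exact p1
    have stepD : GLPrv (MF.imp (chi Φ f.1) (MF.box B)) :=
      GLPrv.imp_trans stepC (GLPrv.imp_trans (GLPrv.boxImp stepB) (GLPrv.lob B))
    have stepE : GLPrv (MF.imp (chi Φ f.1) (MF.neg (MF.box B))) := chi_proj_false hB hf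
    exact f.2 (GLPrv.r_neg_elim stepD stepE)
  -- extend by Lindenbaum
  obtain ⟨g, hgcon, hagree⟩ := lindenbaum X (Φ \ s₀).card s₀ rfl hs₀sub g₀ hcon
  have hmB : B ∈ s₀ := by
    rw [hs₀]; exact Finset.mem_insert_of_mem (Finset.mem_insert_self _ _)
  have hmbB : MF.box B ∈ s₀ := by
    rw [hs₀]; exact Finset.mem_insert_self _ _
  have hmP : ∀ C ∈ P, C ∈ s₀ := by
    intro C hC
    rw [hs₀]
    exact Finset.mem_insert_of_mem (Finset.mem_insert_of_mem hC)
  refine ⟨⟨g, hgcon⟩, ⟨?_, B, hB, ?_, hf⟩, ?_⟩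
  · intro C hCΦ hfC
    have hCT : MF.box C ∈ T := by
      rw [hT, boxT, Finset.mem_filter]
      exact ⟨hCΦ, rfl, hfC⟩
    have hCP : MF.box C ∈ P := Finset.mem_union_left _ hCT
    have hCP' : C ∈ P := by
      apply Finset.mem_union_right
      exact Finset.mem_image.mpr ⟨MF.box C, hCT, rfl⟩
    constructor
    · show g C = true
      rw [hagree C (hmP C hCP')]
      exact hg₀P C hCP'
    · show g (MF.box C) = true
      rw [hagree (MF.box C) (hmP _ hCP)]
      exact hg₀P _ hCP
  · show g (MF.box B) = true
    rw [hagree (MF.box B) hmbB]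
    exact hg₀boxB
  · show g B = false
    rw [hagree B hmB]
    exact hg₀B

theorem truth_lemma (X : MF) : ∀ B, B ∈ X.subF → ∀ f : CW X,
    (Tr (CM X) B f ↔ f.1 B = true) := by
  intro B
  induction B with
  | var n =>
      intro _ f
      exact Iff.rfl
  | fal =>
      intro hB f
      constructor
      · intro h; exact h.elim
      · intro h
        exact absurd (chi_proj_true (f := f.1) hB h) f.2
  | imp B C ihB ihC =>
      intro hBC f
      have hBm : B ∈ X.subF := MF.imp_mem_left hBC
      have hCm : C ∈ X.subF := MF.imp_mem_right hBC
      show (Tr (CM X) B f → Tr (CM X) C f) ↔ _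
      rw [ihB hBm f, ihC hCm f]
      constructor
      · intro h
        by_contra hne
        rw [Bool.not_eq_true] at hne
        have pneg : GLPrv (MF.imp (chi X.subF f.1) (MF.neg (MF.imp B C))) :=
          chi_proj_false hBC hne
        by_cases hfB : f.1 B = true
        · have hfC := h hfB
          have p1 : GLPrv (MF.imp (chi X.subF f.1) C) := chi_proj_true hCm hfC
          have p2 : GLPrv (MF.imp (chi X.subF f.1) (MF.imp B C)) :=
            GLPrv.imp_trans p1 (GLPrv.t_c_imp B C)
          exact f.2 (GLPrv.r_neg_elim p2 pneg)
        · rw [Bool.not_eq_true] at hfB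
          have p1 : GLPrv (MF.imp (chi X.subF f.1) (MF.neg B)) := chi_proj_false hBm hfB
          have p2 : GLPrv (MF.imp (chi X.subF f.1) (MF.imp B C)) :=
            GLPrv.imp_trans p1 (GLPrv.t_negb_imp B C)
          exact f.2 (GLPrv.r_neg_elim p2 pneg)
      · intro h hfB
        by_contra hne
        rw [Bool.not_eq_true] at hne
        have p1 : GLPrv (MF.imp (chi X.subF f.1) (MF.imp B C)) := chi_proj_true hBC h
        have p2 : GLPrv (MF.imp (chi X.subF f.1) B) := chi_proj_true hBm hfB
        have p3 : GLPrv (MF.imp (chi X.subF f.1) C) := GLPrv.impMP p1 p2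
        have p4 : GLPrv (MF.imp (chi X.subF f.1) (MF.neg C)) := chi_proj_false hCm hne
        exact f.2 (GLPrv.r_neg_elim p3 p4)
  | box B ihB =>
      intro hbB f
      have hBm : B ∈ X.subF := MF.box_mem_unbox hbB
      constructor
      · intro hTr
        by_contra hne
        rw [Bool.not_eq_true] at hne
        obtain ⟨g, hR, hgB⟩ := exists_successor X f B hbB hne
        have := (ihB hBm g).mp (hTr g hR)
        simp [this] at hgB
      · intro hval g hR
        exact (ihB hBm g).mpr (hR.1 B hbB hval).1

theorem completeness {X : MF} (h : ¬ GLPrv X) :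
    ∃ f : CW X, ¬ Tr (CM X) X f := by
  classical
  have hcon : ConOn {X} (fun _ => false) := by
    intro hneg
    apply h
    apply GLPrv.r_dne
    refine GLPrv.imp_trans ?_ hneg
    apply chi_intro
    intro C hC
    rw [Finset.mem_singleton] at hC
    rw [hC]
    exact GLPrv.t_id _
  have hsub : ({X} : Finset MF) ⊆ X.subF :=
    Finset.singleton_subset_iff.mpr (MF.mem_subF_self X)
  obtain ⟨g, hgcon, hagree⟩ := lindenbaum X _ {X} rfl hsub _ hcon
  refine ⟨⟨g, hgcon⟩, ?_⟩
  rw [truth_lemma X X (MF.mem_subF_self X) ⟨g, hgcon⟩]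
  show ¬ g X = true
  rw [hagree X (Finset.mem_singleton_self X)]
  simp

end Truth

section Chain
open MF

/-- Accessibility for the chain extension of a model below `w₀`. -/
def chainR (M : KModel) (w₀ : M.W) : (ℕ ⊕ M.W) → (ℕ ⊕ M.W) → Prop
  | Sum.inl i, Sum.inl j => j < i
  | Sum.inl _, Sum.inr v => M.R w₀ v
  | Sum.inr v, Sum.inr u => M.R v u
  | Sum.inr _, Sum.inl _ => False

/-- The model `M` extended by an infinite descending chain sitting above the
cone of `w₀`, each chain world carrying the valuation of `w₀`. -/
def ChainM (M : KModel) (w₀ : M.W) : KModel where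
  W := ℕ ⊕ M.W
  R := chainR M w₀
  val := fun x n => match x with
    | Sum.inl _ => M.val w₀ n
    | Sum.inr v => M.val v n
  trans := by
    intro x y z hxy hyz
    match x, y, z with
    | Sum.inl i, Sum.inl j, Sum.inl k =>
        exact lt_trans hyz hxy
    | Sum.inl i, Sum.inl j, Sum.inr v => exact hyz
    | Sum.inl i, Sum.inr v, Sum.inr u => exact M.trans hxy hyz
    | Sum.inr v, Sum.inr u, Sum.inr t => exact M.trans hxy hyz
    | Sum.inl _, Sum.inr _, Sum.inl _ => exact hyz.elim
    | Sum.inr _, Sum.inl _, _ => exact hxy.elim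
    | Sum.inr _, Sum.inr _, Sum.inl _ => exact hyz.elim
  cwf := by
    have hinr : ∀ v : M.W, Acc (Function.swap (chainR M w₀)) (Sum.inr v) := by
      intro v
      induction v using WellFounded.induction M.cwf with
      | _ v ih =>
          constructor
          intro y hy
          match y with
          | Sum.inl j => exact hy.elim
          | Sum.inr u => exact ih u hy
    have hinl : ∀ i : ℕ, Acc (Function.swap (chainR M w₀)) (Sum.inl i) := by
      intro i
      induction i using Nat.strong_induction_on with
      | _ i ih =>
          constructor
          intro y hy
          match y with
          | Sum.inl j => exact ih j hy
          | Sum.inr u => exact hinr u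
    constructor
    intro x
    match x with
    | Sum.inl i => exact hinl i
    | Sum.inr v => exact hinr v

/-- Truth at an `inr`-world of the chain model agrees with truth in `M`. -/
lemma chain_transfer (M : KModel) (w₀ : M.W) :
    ∀ (B : MF) (v : M.W), Tr (ChainM M w₀) B (Sum.inr v) ↔ Tr M B v := by
  intro B
  induction B with
  | var n => intro v; exact Iff.rfl
  | fal => intro v; exact Iff.rfl
  | imp B C ihB ihC =>
      intro v
      show (Tr (ChainM M w₀) B (Sum.inr v) → Tr (ChainM M w₀) C (Sum.inr v)) ↔ _
      rw [ihB v, ihC v]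
      exact Iff.rfl
  | box B ihB =>
      intro v
      constructor
      · intro h u hu
        exact (ihB u).mp (h (Sum.inr u) hu)
      · intro h y hy
        match y with
        | Sum.inl j => exact hy.elim
        | Sum.inr u => exact (ihB u).mpr (h u hy)

/-- If reflection holds at `w₀` for all boxed subformulas of `X`, truth of
subformulas of `X` at chain worlds agrees with truth at `w₀`. -/
lemma chain_agree (M : KModel) (w₀ : M.W) (X : MF)
    (hrefl : ∀ B, MF.box B ∈ X.subF → Tr M (MF.box B) w₀ → Tr M B w₀) :
    ∀ B, B ∈ X.subF → ∀ i : ℕ, Tr (ChainM M w₀) B (Sum.inl i) ↔ Tr M B w₀ := by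
  intro B
  induction B with
  | var n => intro hB i; exact Iff.rfl
  | fal => intro hB i; exact Iff.rfl
  | imp B C ihB ihC =>
      intro hB i
      show (Tr (ChainM M w₀) B (Sum.inl i) → Tr (ChainM M w₀) C (Sum.inl i)) ↔ _
      rw [ihB (MF.imp_mem_left hB) i, ihC (MF.imp_mem_right hB) i]
      exact Iff.rfl
  | box B ihB =>
      intro hB i
      have hBm : B ∈ X.subF := MF.box_mem_unbox hB
      constructor
      · intro h v hv
        exact (chain_transfer M w₀ B v).mp (h (Sum.inr v) hv)
      · intro h y hy
        match y with
        | Sum.inl j =>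
            exact (ihB hBm j).mpr (hrefl B hB h)
        | Sum.inr v =>
            exact (chain_transfer M w₀ B v).mpr (h v hy)

/-- Chain worlds have unbounded depth: `□ⁿ(¬⊤)` fails at `inl i` for `n ≤ i`. -/
lemma chain_depth (M : KModel) (w₀ : M.W) :
    ∀ (n i : ℕ), n ≤ i → ¬ Tr (ChainM M w₀) (MF.boxn n (MF.neg MF.top)) (Sum.inl i) := by
  intro n
  induction n with
  | zero =>
      intro i _ h
      exact h Tr_top
  | succ n ih =>
      intro i hi h
      have : Tr (ChainM M w₀) (MF.boxn n (MF.neg MF.top)) (Sum.inl (i-1)) := by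
        apply h (Sum.inl (i-1))
        show i - 1 < i
        omega
      exact ih (i-1) (by omega) this

/-- Every GLS theorem is true at all sufficiently late chain worlds. -/
lemma gls_limit (M : KModel) (w₀ : M.W) {B : MF} (h : GLSPrv B) :
    ∃ N : ℕ, ∀ i ≥ N, Tr (ChainM M w₀) B (Sum.inl i) := by
  induction h with
  | gl h => exact ⟨0, fun i _ => soundness h _ _⟩
  | @ax A s hmem =>
      rw [Set.mem_singleton_iff] at hmem
      subst hmem
      show ∃ N, ∀ i ≥ N, Tr (ChainM M w₀) (MF.imp (MF.box (s 0)) (s 0)) (Sum.inl i)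
      by_cases hall : ∀ i : ℕ, Tr (ChainM M w₀) (MF.box (s 0)) (Sum.inl i)
      · refine ⟨0, fun i _ => ?_⟩
        intro _
        exact hall (i+1) (Sum.inl i) (by show i < i + 1; omega)
      · push_neg at hall
        obtain ⟨i₀, hi₀⟩ := hall
        refine ⟨i₀, fun i hi => ?_⟩
        intro hbox
        exfalso
        apply hi₀
        rcases eq_or_lt_of_le hi with rfl | hlt
        · exact hbox
        · exact Tr_box_mono hbox (show i₀ < i from hlt)
  | mp h1 h2 ih1 ih2 =>
      obtain ⟨N1, hN1⟩ := ih1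
      obtain ⟨N2, hN2⟩ := ih2
      exact ⟨max N1 N2, fun i hi =>
        hN1 i (le_trans (le_max_left _ _) hi) (hN2 i (le_trans (le_max_right _ _) hi))⟩

end Chain

section Main
open MF

lemma MF.subst_boxn (s : ℕ → MF) (n : ℕ) (B : MF) :
    (MF.boxn n B).subst s = MF.boxn n (B.subst s) := by
  induction n with
  | zero => rfl
  | succ n ih => show MF.box _ = _; rw [ih]; rfl

lemma MF.subst_dian_top (s : ℕ → MF) (n : ℕ) :
    (MF.dian n MF.top).subst s = MF.dian n MF.top := by
  show MF.imp ((MF.boxn n (MF.neg MF.top)).subst s) MF.fal = _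
  rw [MF.subst_boxn]
  rfl

/-- GLS proves `◇ⁿ⊤`. -/
lemma GLS_dian (n : ℕ) : GLSPrv (MF.dian n MF.top) := by
  induction n with
  | zero =>
      apply ExtPrv.gl
      apply GLPrv.taut
      intro v hv hf
      simp only [MF.dian, MF.boxn, MF.top, MF.neg, hv, hf]
      rfl
  | succ n ih =>
      have hax : GLSPrv (MF.imp (MF.box (MF.boxn n (MF.neg MF.top))) (MF.boxn n (MF.neg MF.top))) := by
        have := ExtPrv.ax (Ax := {MF.imp (MF.box (MF.var 0)) (MF.var 0)})
          (A := MF.imp (MF.box (MF.var 0)) (MF.var 0))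
          (fun _ => MF.boxn n (MF.neg MF.top)) rfl
        exact this
      have t : GLPrv (MF.imp
          (MF.imp (MF.box (MF.boxn n (MF.neg MF.top))) (MF.boxn n (MF.neg MF.top)))
          (MF.imp (MF.neg (MF.boxn n (MF.neg MF.top)))
            (MF.neg (MF.box (MF.boxn n (MF.neg MF.top)))))) := by
        have tg : ∀ P Q : MF, GLPrv (MF.imp (MF.imp P Q) (MF.imp (MF.neg Q) (MF.neg P))) := by
          intro P Q
          apply GLPrv.taut; intro v hv hf
          simp only [MF.neg, hv, hf]
          cases v P <;> cases v Q <;> rfl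
        exact tg _ _
      exact ExtPrv.mp (ExtPrv.mp (ExtPrv.gl t) hax) ih

/-- GL_ω is contained in GLS. -/
lemma glomega_to_gls {B : MF} (h : GLomegaPrv B) : GLSPrv B := by
  induction h with
  | gl h => exact ExtPrv.gl h
  | ax s hmem =>
      obtain ⟨n, rfl⟩ := hmem
      rw [MF.subst_dian_top]
      exact GLS_dian n
  | mp _ _ ih1 ih2 => exact ExtPrv.mp ih1 ih2

/-- Extract an `R`-chain of length `n` below a world where `□ⁿ Y` fails. -/
lemma exists_chain (M : KModel) (Y : MF) :
    ∀ (n : ℕ) (w : M.W), ¬ Tr M (MF.boxn n Y) w →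
    ∃ c : ℕ → M.W, c 0 = w ∧ (∀ i j, i < j → j ≤ n → M.R (c i) (c j)) := by
  intro n
  induction n with
  | zero =>
      intro w _
      exact ⟨fun _ => w, rfl, fun i j hij hj => by omega⟩
  | succ n ih =>
      intro w hw
      have : ∃ v, M.R w v ∧ ¬ Tr M (MF.boxn n Y) v := by
        by_contra hc
        push_neg at hc
        exact hw (fun v hv => hc v hv)
      obtain ⟨v, hv, hnv⟩ := this
      obtain ⟨c', hc0, hcrel⟩ := ih v hnv
      refine ⟨fun k => if k = 0 then w else c' (k-1), by simp, ?_⟩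
      intro i j hij hj
      have hj0 : j ≠ 0 := by omega
      simp only [hj0, if_false]
      by_cases hi0 : i = 0
      · simp only [hi0, if_pos rfl]
        by_cases hj1 : j - 1 = 0
        · rw [hj1, hc0]; exact hv
        · have : M.R (c' 0) (c' (j-1)) := hcrel 0 (j-1) (by omega) (by omega)
          rw [hc0] at this
          exact M.trans hv this
      · simp only [hi0, if_false]
        exact hcrel (i-1) (j-1) (by omega) (by omega)

/-- The boxed subformulas of `□A` number `cx A + 1`. -/
lemma card_boxed (A : MF) :
    ((MF.box A).subF.filter (fun B => MF.isBox B = true)).card = MF.cx A + 1 := by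
  show ((insert (MF.box A) A.subF).filter (fun B => MF.isBox B = true)).card = _
  rw [Finset.filter_insert]
  rw [if_pos (show MF.isBox (MF.box A) = true from rfl)]
  rw [Finset.card_insert_of_notMem
    (fun h => MF.box_not_mem_subF A (Finset.mem_of_mem_filter _ h))]
  rfl

end Main

section Glue
open MF

lemma not_Tr_imp {M : KModel} {B C : MF} {w : M.W} (h : ¬ Tr M (MF.imp B C) w) :
    Tr M B w ∧ ¬ Tr M C w := by
  classical
  by_cases hB : Tr M B w
  · exact ⟨hB, fun hC => h (fun _ => hC)⟩
  · exact (h (fun hB' => absurd hB' hB)).elim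

/-- Pigeonhole: a world of depth `cx A + 1` satisfying `□A` yields a world
satisfying both `⋀Rf(□A)` and `□A`, contradicting (1). -/
lemma pigeon (A : MF) (h1 : GLPrv (MF.imp (MF.conjFin (MF.RfSet (MF.box A))) (MF.neg (MF.box A))))
    (M : KModel) (w : M.W) (n : ℕ) (hn : n = MF.cx A + 1)
    (hdia : ¬ Tr M (MF.boxn n (MF.neg MF.top)) w)
    (hnb : Tr M (MF.box A) w) : False := by
  classical
  obtain ⟨c, hc0, hcrel⟩ := exists_chain M (MF.neg MF.top) n w hdia
  have hbox : ∀ i, i ≤ n → Tr M (MF.box A) (c i) := by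
    intro i hi
    rcases Nat.eq_zero_or_pos i with rfl | hpos
    · rwa [hc0]
    · have h := hcrel 0 i hpos hi
      rw [hc0] at h
      exact Tr_box_mono hnb h
  by_cases hex : ∃ i, i ≤ n ∧ Tr M (MF.conjFin (MF.RfSet (MF.box A))) (c i)
  · obtain ⟨i, hi, hTrRf⟩ := hex
    have hsound := soundness h1 M (c i)
    exact (Tr_neg.mp (hsound hTrRf)) (hbox i hi)
  · push_neg at hex
    have hsel : ∀ i, ∃ E, i ≤ n →
        (E ∈ (MF.box A).subF.filter (fun B => MF.isBox B = true) ∧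
          Tr M E (c i) ∧ ¬ Tr M (MF.unbox E) (c i)) := by
      intro i
      by_cases hi : i ≤ n
      · have hnc := hex i hi
        rw [conjFin_eq_bigC, Tr_bigC] at hnc
        push_neg at hnc
        obtain ⟨C, hCmem, hCfalse⟩ := hnc
        rw [Finset.mem_toList] at hCmem
        obtain ⟨E, hEmem, rfl⟩ := Finset.mem_image.mp hCmem
        obtain ⟨h1', h2'⟩ := not_Tr_imp hCfalse
        exact ⟨E, fun _ => ⟨hEmem, h1', h2'⟩⟩
      · exact ⟨MF.fal, fun h => absurd h hi⟩
    choose Ef hEf using hsel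
    have key : ∀ i j, i < j → j ≤ n → Ef i ≠ Ef j := by
      intro i j hij hj hEq
      obtain ⟨hmem_i, htr_i, -⟩ := hEf i (by omega)
      obtain ⟨-, -, hnu_j⟩ := hEf j hj
      have hboxEq := MF.eq_box_unbox_of_isBox (Finset.mem_filter.mp hmem_i).2
      have htr : Tr M (MF.unbox (Ef i)) (c j) := by
        rw [hboxEq] at htr_i
        exact htr_i (c j) (hcrel i j hij hj)
      rw [hEq] at htr
      exact hnu_j htr
    have hinj : Set.InjOn Ef (Finset.range (n+1)) := by
      intro i hi j hj hEq
      have hi' : i ≤ n := by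
        have := Finset.mem_coe.mp hi
        simp only [Finset.mem_range] at this
        omega
      have hj' : j ≤ n := by
        have := Finset.mem_coe.mp hj
        simp only [Finset.mem_range] at this
        omega
      rcases lt_trichotomy i j with h | h | h
      · exact absurd hEq (key i j h hj')
      · exact h
      · exact absurd hEq.symm (key j i h hi')
    have hcard := Finset.card_le_card_of_injOn Ef
      (fun i hi => (hEf i (by simp only [Finset.mem_coe, Finset.mem_range] at hi; omega)).1) hinj
    rw [Finset.card_range, card_boxed] at hcard
    omega

/-- Limit argument: a world satisfying `⋀Rf(□A)` and `□A` refutes `GLS ⊢ ¬□A`. -/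
lemma limit_contra (A : MF) (h4 : GLSPrv (MF.neg (MF.box A)))
    (M : KModel) (w : M.W)
    (hRf : Tr M (bigC (MF.RfSet (MF.box A)).toList) w)
    (hnb : Tr M (MF.box A) w) : False := by
  have hrefl : ∀ B, MF.box B ∈ (MF.box A).subF →
      Tr M (MF.box B) w → Tr M B w := by
    intro B hB htr
    have hmem : MF.imp (MF.box B) B ∈ MF.RfSet (MF.box A) :=
      Finset.mem_image.mpr ⟨MF.box B, Finset.mem_filter.mpr ⟨hB, rfl⟩, rfl⟩
    exact (Tr_bigC.mp hRf _ (Finset.mem_toList.mpr hmem)) htr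
  have hagree := chain_agree M w (MF.box A) hrefl
  have hboxchain : ∀ i, Tr (ChainM M w) (MF.box A) (Sum.inl i) :=
    fun i => (hagree (MF.box A) (MF.mem_subF_self _) i).mpr hnb
  obtain ⟨N, hN⟩ := gls_limit M w h4
  exact (Tr_neg.mp (hN N (le_refl N))) (hboxchain N)

end Glue

/-- the four characterizations of `GL_ω ⊢ ¬□A` are equivalent. -/
theorem negbox_tfae (A : MF) :
    List.TFAE
      [GLPrv (MF.imp (MF.conjFin (MF.RfSet (MF.box A))) (MF.neg (MF.box A))),
       GLPrv (MF.imp (MF.dian (MF.cx A + 1) MF.top) (MF.neg (MF.box A))),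
       GLomegaPrv (MF.neg (MF.box A)),
       GLSPrv (MF.neg (MF.box A))] := by
  have imp12 : GLPrv (MF.imp (MF.conjFin (MF.RfSet (MF.box A))) (MF.neg (MF.box A))) →
      GLPrv (MF.imp (MF.dian (MF.cx A + 1) MF.top) (MF.neg (MF.box A))) := by
    intro h1
    by_contra h2
    obtain ⟨f₀, hf₀⟩ := completeness h2
    obtain ⟨hdia, hnb⟩ := not_Tr_imp hf₀
    have hdia' : ¬ Tr (CM (MF.imp (MF.dian (MF.cx A + 1) MF.top) (MF.neg (MF.box A))))
        (MF.boxn (MF.cx A + 1) (MF.neg MF.top)) f₀ := hdia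
    have hnb' : Tr (CM (MF.imp (MF.dian (MF.cx A + 1) MF.top) (MF.neg (MF.box A))))
        (MF.box A) f₀ := Classical.not_not.mp hnb
    exact pigeon A h1 (CM (MF.imp (MF.dian (MF.cx A + 1) MF.top) (MF.neg (MF.box A)))) f₀ (MF.cx A + 1) rfl hdia' hnb'
  have imp23 : GLPrv (MF.imp (MF.dian (MF.cx A + 1) MF.top) (MF.neg (MF.box A))) →
      GLomegaPrv (MF.neg (MF.box A)) := by
    intro h2
    have hax : GLomegaPrv (MF.dian (MF.cx A + 1) MF.top) := by
      have := ExtPrv.ax (Ax := Set.range fun n => MF.dian n MF.top) MF.var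
        ⟨MF.cx A + 1, rfl⟩
      rwa [MF.subst_dian_top] at this
    exact ExtPrv.mp (ExtPrv.gl h2) hax
  have imp34 : GLomegaPrv (MF.neg (MF.box A)) → GLSPrv (MF.neg (MF.box A)) :=
    fun h3 => glomega_to_gls h3
  have imp41 : GLSPrv (MF.neg (MF.box A)) →
      GLPrv (MF.imp (MF.conjFin (MF.RfSet (MF.box A))) (MF.neg (MF.box A))) := by
    intro h4
    by_contra h1
    obtain ⟨f₀, hf₀⟩ := completeness h1
    obtain ⟨hRf, hnb⟩ := not_Tr_imp hf₀
    have hRf' : Tr (CM (MF.imp (MF.conjFin (MF.RfSet (MF.box A))) (MF.neg (MF.box A))))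
        (bigC (MF.RfSet (MF.box A)).toList) f₀ := hRf
    have hnb' : Tr (CM (MF.imp (MF.conjFin (MF.RfSet (MF.box A))) (MF.neg (MF.box A))))
        (MF.box A) f₀ := Classical.not_not.mp hnb
    exact limit_contra A h4 (CM (MF.imp (MF.conjFin (MF.RfSet (MF.box A))) (MF.neg (MF.box A)))) f₀ hRf' hnb'
  tfae_have 1 → 2 := imp12
  tfae_have 2 → 3 := imp23
  tfae_have 3 → 4 := imp34
  tfae_have 4 → 1 := imp41
  tfae_finish
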